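/- arXiv:2308.05706 — 2 statements merged into one kernel-verified Lean document; each statement's English description precedes it below -/
import Mathlib

section
/- Let k be a field, H a Hopf algebra over k, and B a right coideal subalgebra of H with quotient map π : H → H/HB⁺. Then the linear map H ⊗_k H → (H/HB⁺) ⊗_k H defined by x ⊗ y ↦ Σ π(x₍₁₎) ⊗ x₍₂₎y vanishes on the subspace J_B, and the induced map ξ : H ⊗_B H → (H/HB⁺) ⊗_k H is a linear isomorphism. -/
open TensorProduct

noncomputable section

namespace HopfGalois

variable (k : Type*) (H : Type*) [Field k] [Ring H] [HopfAlgebra k H]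

/-- The linear map `H ⊗ H → H`, `x ⊗ y ↦ ε(x) • y`. -/
def epsTensorId : H ⊗[k] H →ₗ[k] H :=
  (TensorProduct.lid k H).toLinearMap ∘ₗ
    TensorProduct.map (Coalgebra.counit : H →ₗ[k] k) (LinearMap.id : H →ₗ[k] H)

/-- The linear map `H ⊗ H → H`, `x ⊗ y ↦ ε(y) • x`. -/
def idTensorEps : H ⊗[k] H →ₗ[k] H :=
  (TensorProduct.rid k H).toLinearMap ∘ₗ
    TensorProduct.map (LinearMap.id : H →ₗ[k] H) (Coalgebra.counit : H →ₗ[k] k)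

/-- `x ⊗ y ↦ Σ x₍₁₎ ⊗ π_I(x₍₂₎) ⊗ y`. -/
def cotensorL (I : Submodule k H) : H ⊗[k] H →ₗ[k] H ⊗[k] ((H ⧸ I) ⊗[k] H) :=
  TensorProduct.map (LinearMap.id : H →ₗ[k] H)
      (TensorProduct.map I.mkQ (LinearMap.id : H →ₗ[k] H))
    ∘ₗ (TensorProduct.assoc k H H H).toLinearMap
    ∘ₗ TensorProduct.map (Coalgebra.comul : H →ₗ[k] H ⊗[k] H) (LinearMap.id : H →ₗ[k] H)

/-- `x ⊗ y ↦ Σ x ⊗ π_I(y₍₁₎) ⊗ y₍₂₎`. -/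
def cotensorR (I : Submodule k H) : H ⊗[k] H →ₗ[k] H ⊗[k] ((H ⧸ I) ⊗[k] H) :=
  TensorProduct.map (LinearMap.id : H →ₗ[k] H)
    (TensorProduct.map I.mkQ (LinearMap.id : H →ₗ[k] H)
      ∘ₗ (Coalgebra.comul : H →ₗ[k] H ⊗[k] H))

/-- The cotensor product `H □^{H/I} H` as a subspace of `H ⊗ H`. -/
def cotensor (I : Submodule k H) : Submodule k (H ⊗[k] H) :=
  LinearMap.ker (cotensorL k H I - cotensorR k H I)

/-- The subspace of coinvariants `H^{co H/I}`:
`{x ∈ H : Σ π_I(x₍₁₎) ⊗ x₍₂₎ = π_I(1) ⊗ x}`. -/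
def coinv (I : Submodule k H) : Submodule k H :=
  LinearMap.ker
    ((TensorProduct.map I.mkQ (LinearMap.id : H →ₗ[k] H)
        ∘ₗ (Coalgebra.comul : H →ₗ[k] H ⊗[k] H))
      - TensorProduct.mk k (H ⧸ I) H (I.mkQ 1))

/-- A left ideal coideal: a left ideal `I` with `ε(I) = 0` and `Δ(I) ⊆ I ⊗ H + H ⊗ I`. -/
structure IsLeftIdealCoideal (I : Submodule k H) : Prop where
  mul_mem_left : ∀ (h x : H), x ∈ I → h * x ∈ I
  counit_zero : ∀ x ∈ I, (Coalgebra.counit : H →ₗ[k] k) x = 0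
  comul_mem : ∀ x ∈ I, (Coalgebra.comul : H →ₗ[k] H ⊗[k] H) x ∈
    LinearMap.range (TensorProduct.map I.subtype (LinearMap.id : H →ₗ[k] H)) ⊔
      LinearMap.range (TensorProduct.map (LinearMap.id : H →ₗ[k] H) I.subtype)

/-- A right coideal subalgebra: a subalgebra `B` with `Δ(B) ⊆ B ⊗ H`. -/
def IsRightCoidealSubalgebra (B : Subalgebra k H) : Prop :=
  ∀ b ∈ B, (Coalgebra.comul : H →ₗ[k] H ⊗[k] H) b ∈
    LinearMap.range
      (TensorProduct.map (Subalgebra.toSubmodule B).subtype (LinearMap.id : H →ₗ[k] H))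

/-- The left ideal of `H` generated by a subset `S`, as a `k`-subspace of `H`. -/
def leftIdealGen (S : Set H) : Submodule k H :=
  Submodule.span k {z : H | ∃ h : H, ∃ b ∈ S, z = h * b}

/-- `S⁺ = S ∩ ker ε`. -/
def plusPart (S : Set H) : Set H :=
  {b ∈ S | (Coalgebra.counit : H →ₗ[k] k) b = 0}

/-- `H·S⁺`, the left ideal of `H` generated by `S ∩ ker ε`. -/
def HSplus (S : Set H) : Submodule k H :=
  leftIdealGen k H (plusPart k H S)

/-- The subspace `J_B ⊆ H ⊗ H` spanned by `{xb ⊗ y − x ⊗ by : x, y ∈ H, b ∈ B}`,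
so that `H ⊗_B H = (H ⊗ H)/J_B`. -/
def JB (S : Set H) : Submodule k (H ⊗[k] H) :=
  Submodule.span k
    {z : H ⊗[k] H | ∃ x y : H, ∃ b ∈ S, z = (x * b) ⊗ₜ[k] y - x ⊗ₜ[k] (b * y)}

/-- `B` is the equalizer of the two canonical maps `H → H ⊗_B H`. -/
def equalizerCond (S : Set H) : Prop :=
  {h : H | h ⊗ₜ[k] (1 : H) - (1 : H) ⊗ₜ[k] h ∈ JB k H S} = S

/-- `H/I` is the coequalizer of `ε ⊗ id` and `id ⊗ ε` restricted to `H □^{H/I} H`, i.e.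
`I` is the subspace spanned by `{Σ ε(xᵢ)yᵢ − Σ xᵢε(yᵢ) : Σ xᵢ ⊗ yᵢ ∈ H □^{H/I} H}`. -/
def coequalizerCond (I : Submodule k H) : Prop :=
  I = Submodule.map (epsTensorId k H - idTensorEps k H) (cotensor k H I)


/-- The linear map `H ⊗ H → (H/I) ⊗ H`, `x ⊗ y ↦ Σ π_I(x₍₁₎) ⊗ x₍₂₎y`. -/
def xiAux (k H : Type*) [Field k] [Ring H] [HopfAlgebra k H] (I : Submodule k H) :
    H ⊗[k] H →ₗ[k] (H ⧸ I) ⊗[k] H :=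
  TensorProduct.map I.mkQ (LinearMap.mul' k H)
    ∘ₗ (TensorProduct.assoc k H H H).toLinearMap
    ∘ₗ TensorProduct.map (Coalgebra.comul : H →ₗ[k] H ⊗[k] H) (LinearMap.id : H →ₗ[k] H)


section Aux
open Coalgebra
variable {k H : Type*} [Field k] [Ring H] [HopfAlgebra k H]

local notation "ε" => (Coalgebra.counit : H →ₗ[k] k)
local notation "δ" => (Coalgebra.comul : H →ₗ[k] H ⊗[k] H)
local notation "𝒮" => (HopfAlgebra.antipode k : H →ₗ[k] H)


lemma repr_sum_counit_left {a : H} (r : Coalgebra.Repr k a (H × H)) :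
    ∑ i ∈ r.index, ε (r.left i) • r.right i = a := by
  have h := Coalgebra.sum_counit_tmul_eq r
  have h2 := congrArg (TensorProduct.lid k H) h
  simp only [map_sum, lid_tmul] at h2
  simpa using h2

lemma repr_sum_counit_right {a : H} (r : Coalgebra.Repr k a (H × H)) :
    ∑ i ∈ r.index, ε (r.right i) • r.left i = a := by
  have h := Coalgebra.sum_tmul_counit_eq r
  have h2 := congrArg (TensorProduct.rid k H) h
  simp only [map_sum, rid_tmul] at h2
  simpa using h2

/-- Coassociativity exchange for iterated `Repr`s, applied through a linear map. -/
lemma triple_exchange {M : Type*} [AddCommGroup M] [Module k M]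
    (L : H ⊗[k] (H ⊗[k] H) →ₗ[k] M) {b : H} (rb : Coalgebra.Repr k b (H × H))
    (rb1 : ∀ j : rb.ι, Coalgebra.Repr k (rb.left j) (H × H)) (rb2 : ∀ j : rb.ι, Coalgebra.Repr k (rb.right j) (H × H)) :
    ∑ j ∈ rb.index, ∑ q ∈ (rb2 j).index,
        L (rb.left j ⊗ₜ[k] ((rb2 j).left q ⊗ₜ[k] (rb2 j).right q))
      = ∑ j ∈ rb.index, ∑ p ∈ (rb1 j).index,
        L ((rb1 j).left p ⊗ₜ[k] ((rb1 j).right p ⊗ₜ[k] rb.right j)) := by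
  have key := Coalgebra.sum_tmul_tmul_eq (R := k) rb rb1 rb2
  have h2 := congrArg L key
  simp only [map_sum] at h2
  exact h2.symm




/-- Σ_{p,q} S(x₍₁₎y₍₁₎)(x₍₂₎y₍₂₎) = ε(x)ε(y) • 1 -/
lemma sum_antipode_mul_mul {u v : H} (ru : Coalgebra.Repr k u (H × H)) (rv : Coalgebra.Repr k v (H × H)) :
    ∑ p ∈ ru.index, ∑ q ∈ rv.index,
      𝒮 (ru.left p * rv.left q) * (ru.right p * rv.right q) = (ε u * ε v) • (1 : H) := by
  have e1 : (∑ p ∈ ru.index, ∑ q ∈ rv.index,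
      (ru.left p * rv.left q) ⊗ₜ[k] (ru.right p * rv.right q)) = Coalgebra.comul (u * v) := by
    rw [Bialgebra.comul_mul, ← ru.eq, ← rv.eq, Finset.sum_mul_sum]
    simp [Algebra.TensorProduct.tmul_mul_tmul]
  have e2 := congrArg (LinearMap.mul' k H ∘ₗ LinearMap.rTensor H 𝒮) e1
  simp only [LinearMap.coe_comp, Function.comp_apply, map_sum, LinearMap.rTensor_tmul,
    LinearMap.mul'_apply] at e2
  rw [e2]
  rw [HopfAlgebra.mul_antipode_rTensor_comul_apply]
  simp [Algebra.linearMap_apply, Algebra.algebraMap_eq_smul_one, Bialgebra.counit_mul]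

lemma conv_collapse (c : H) {x y : H} (rx : Coalgebra.Repr k x (H × H)) (ry : Coalgebra.Repr k y (H × H)) :
    ∑ p ∈ rx.index, ∑ q ∈ ry.index,
      c * ((rx.left p * ry.left q) * (𝒮 (ry.right q) * 𝒮 (rx.right p)))
      = (ε x * ε y) • c := by
  have h1 : ∀ p ∈ rx.index, ∀ q ∈ ry.index,
      c * ((rx.left p * ry.left q) * (𝒮 (ry.right q) * 𝒮 (rx.right p)))
        = c * (rx.left p * ((ry.left q * 𝒮 (ry.right q)) * 𝒮 (rx.right p))) := by
    intros; rw [mul_assoc (rx.left _), ← mul_assoc (ry.left _)]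
  calc ∑ p ∈ rx.index, ∑ q ∈ ry.index,
        c * ((rx.left p * ry.left q) * (𝒮 (ry.right q) * 𝒮 (rx.right p)))
      = ∑ p ∈ rx.index,
          c * (rx.left p * ((∑ q ∈ ry.index, ry.left q * 𝒮 (ry.right q)) * 𝒮 (rx.right p))) := by
        refine Finset.sum_congr rfl fun p hp => ?_
        rw [Finset.sum_mul, Finset.mul_sum, Finset.mul_sum]
        exact Finset.sum_congr rfl fun q hq => h1 p hp q hq
    _ = ∑ p ∈ rx.index, ε y • (c * (rx.left p * 𝒮 (rx.right p))) := by
        refine Finset.sum_congr rfl fun p hp => ?_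
        rw [HopfAlgebra.sum_mul_antipode_eq_smul, smul_mul_assoc, one_mul, mul_smul_comm,
          mul_smul_comm]
    _ = ε y • (c * ∑ p ∈ rx.index, rx.left p * 𝒮 (rx.right p)) := by
        rw [← Finset.smul_sum, Finset.mul_sum]
    _ = (ε x * ε y) • c := by
        rw [HopfAlgebra.sum_mul_antipode_eq_smul, mul_smul_comm, smul_smul, mul_one, mul_comm]

lemma conv_collapse' (c : H) {x y : H} (rx : Coalgebra.Repr k x (H × H)) (ry : Coalgebra.Repr k y (H × H)) :
    ∑ p ∈ rx.index, ∑ q ∈ ry.index,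
      𝒮 (rx.left p * ry.left q) * ((rx.right p * ry.right q) * c)
      = (ε x * ε y) • c := by
  calc ∑ p ∈ rx.index, ∑ q ∈ ry.index,
        𝒮 (rx.left p * ry.left q) * ((rx.right p * ry.right q) * c)
      = (∑ p ∈ rx.index, ∑ q ∈ ry.index,
          𝒮 (rx.left p * ry.left q) * (rx.right p * ry.right q)) * c := by
        rw [Finset.sum_mul]
        refine Finset.sum_congr rfl fun p _ => ?_
        rw [Finset.sum_mul]
        exact Finset.sum_congr rfl fun q _ => (mul_assoc _ _ _).symm
    _ = (ε x * ε y) • c := by rw [sum_antipode_mul_mul rx ry, smul_mul_assoc, one_mul]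




/-- Trilinear multiplication map. -/
def L3 (g₁ g₂ g₃ : H →ₗ[k] H) : H ⊗[k] (H ⊗[k] H) →ₗ[k] H :=
  LinearMap.mul' k H ∘ₗ LinearMap.lTensor H (LinearMap.mul' k H) ∘ₗ
    TensorProduct.map g₁ (TensorProduct.map g₂ g₃)

@[simp] lemma L3_tmul (g₁ g₂ g₃ : H →ₗ[k] H) (x y z : H) :
    L3 g₁ g₂ g₃ (x ⊗ₜ[k] (y ⊗ₜ[k] z)) = g₁ x * (g₂ y * g₃ z) := by
  simp [L3]

lemma sum_block_swap {M ι₁ ι₂ κ₁ κ₂ : Type*} [AddCommMonoid M]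
    (s : Finset ι₁) (t : ι₁ → Finset ι₂) (u : Finset κ₁) (v : κ₁ → Finset κ₂)
    (f : ι₁ → ι₂ → κ₁ → κ₂ → M) :
    ∑ i ∈ s, ∑ p ∈ t i, ∑ j ∈ u, ∑ q ∈ v j, f i p j q
      = ∑ j ∈ u, ∑ q ∈ v j, ∑ i ∈ s, ∑ p ∈ t i, f i p j q := by
  calc ∑ i ∈ s, ∑ p ∈ t i, ∑ j ∈ u, ∑ q ∈ v j, f i p j q
      = ∑ i ∈ s, ∑ j ∈ u, ∑ p ∈ t i, ∑ q ∈ v j, f i p j q :=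
        Finset.sum_congr rfl fun i _ => Finset.sum_comm
    _ = ∑ j ∈ u, ∑ i ∈ s, ∑ p ∈ t i, ∑ q ∈ v j, f i p j q := Finset.sum_comm
    _ = ∑ j ∈ u, ∑ i ∈ s, ∑ q ∈ v j, ∑ p ∈ t i, f i p j q :=
        Finset.sum_congr rfl fun j _ => Finset.sum_congr rfl fun i _ => Finset.sum_comm
    _ = ∑ j ∈ u, ∑ q ∈ v j, ∑ i ∈ s, ∑ p ∈ t i, f i p j q :=
        Finset.sum_congr rfl fun j _ => Finset.sum_comm

theorem antipode_mul (a b : H) : 𝒮 (a * b) = 𝒮 b * 𝒮 a := by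
  classical
  set ra := Coalgebra.Repr.arbitrary k a with hra
  set rb := Coalgebra.Repr.arbitrary k b with hrb
  set ra1 : ∀ i : ra.ι, Coalgebra.Repr k (ra.left i) (H × H) := fun i => Coalgebra.Repr.arbitrary k _ with hra1
  set ra2 : ∀ i : ra.ι, Coalgebra.Repr k (ra.right i) (H × H) := fun i => Coalgebra.Repr.arbitrary k _ with hra2
  set rb1 : ∀ j : rb.ι, Coalgebra.Repr k (rb.left j) (H × H) := fun j => Coalgebra.Repr.arbitrary k _ with hrb1
  set rb2 : ∀ j : rb.ι, Coalgebra.Repr k (rb.right j) (H × H) := fun j => Coalgebra.Repr.arbitrary k _ with hrb2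
  calc 𝒮 (a * b)
      = 𝒮 ((∑ i ∈ ra.index, ε (ra.right i) • ra.left i)
          * (∑ j ∈ rb.index, ε (rb.right j) • rb.left j)) := by
        rw [repr_sum_counit_right ra, repr_sum_counit_right rb]
    _ = ∑ i ∈ ra.index, ∑ j ∈ rb.index,
          (ε (ra.right i) * ε (rb.right j)) • 𝒮 (ra.left i * rb.left j) := by
        rw [Finset.sum_mul_sum, map_sum]
        refine Finset.sum_congr rfl fun i _ => ?_
        rw [map_sum]
        refine Finset.sum_congr rfl fun j _ => ?_
        rw [smul_mul_assoc, mul_smul_comm, map_smul, map_smul, smul_smul]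
    _ = ∑ i ∈ ra.index, ∑ j ∈ rb.index, ∑ p ∈ (ra2 i).index, ∑ q ∈ (rb2 j).index,
          𝒮 (ra.left i * rb.left j) *
            (((ra2 i).left p * (rb2 j).left q)
              * (𝒮 ((rb2 j).right q) * 𝒮 ((ra2 i).right p))) := by
        exact Finset.sum_congr rfl fun i _ => Finset.sum_congr rfl fun j _ =>
          (conv_collapse _ (ra2 i) (rb2 j)).symm
    _ = ∑ i ∈ ra.index, ∑ p ∈ (ra2 i).index, ∑ j ∈ rb.index, ∑ q ∈ (rb2 j).index,
          𝒮 (ra.left i * rb.left j) *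
            (((ra2 i).left p * (rb2 j).left q)
              * (𝒮 ((rb2 j).right q) * 𝒮 ((ra2 i).right p))) :=
        Finset.sum_congr rfl fun i _ => Finset.sum_comm
    _ = ∑ i ∈ ra.index, ∑ p ∈ (ra2 i).index, ∑ j ∈ rb.index, ∑ q ∈ (rb2 j).index,
          L3 (𝒮 ∘ₗ LinearMap.mulLeft k (ra.left i)) (LinearMap.mulLeft k ((ra2 i).left p))
            (LinearMap.mulRight k (𝒮 ((ra2 i).right p)) ∘ₗ 𝒮)
            (rb.left j ⊗ₜ[k] ((rb2 j).left q ⊗ₜ[k] (rb2 j).right q)) := by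
        simp [L3_tmul]
    _ = ∑ i ∈ ra.index, ∑ p ∈ (ra2 i).index, ∑ j ∈ rb.index, ∑ q ∈ (rb1 j).index,
          L3 (𝒮 ∘ₗ LinearMap.mulLeft k (ra.left i)) (LinearMap.mulLeft k ((ra2 i).left p))
            (LinearMap.mulRight k (𝒮 ((ra2 i).right p)) ∘ₗ 𝒮)
            ((rb1 j).left q ⊗ₜ[k] ((rb1 j).right q ⊗ₜ[k] rb.right j)) :=
        Finset.sum_congr rfl fun i _ => Finset.sum_congr rfl fun p _ =>
          triple_exchange _ rb rb1 rb2
    _ = ∑ i ∈ ra.index, ∑ p ∈ (ra2 i).index, ∑ j ∈ rb.index, ∑ q ∈ (rb1 j).index,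
          𝒮 (ra.left i * (rb1 j).left q) *
            (((ra2 i).left p * (rb1 j).right q)
              * (𝒮 (rb.right j) * 𝒮 ((ra2 i).right p))) := by
        simp [L3_tmul]
    _ = ∑ j ∈ rb.index, ∑ q ∈ (rb1 j).index, ∑ i ∈ ra.index, ∑ p ∈ (ra2 i).index,
          𝒮 (ra.left i * (rb1 j).left q) *
            (((ra2 i).left p * (rb1 j).right q)
              * (𝒮 (rb.right j) * 𝒮 ((ra2 i).right p))) :=
        sum_block_swap _ _ _ _ _
    _ = ∑ j ∈ rb.index, ∑ q ∈ (rb1 j).index, ∑ i ∈ ra.index, ∑ p ∈ (ra2 i).index,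
          L3 (𝒮 ∘ₗ LinearMap.mulRight k ((rb1 j).left q))
            (LinearMap.mulRight k ((rb1 j).right q))
            (LinearMap.mulLeft k (𝒮 (rb.right j)) ∘ₗ 𝒮)
            (ra.left i ⊗ₜ[k] ((ra2 i).left p ⊗ₜ[k] (ra2 i).right p)) := by
        simp [L3_tmul]
    _ = ∑ j ∈ rb.index, ∑ q ∈ (rb1 j).index, ∑ i ∈ ra.index, ∑ p ∈ (ra1 i).index,
          L3 (𝒮 ∘ₗ LinearMap.mulRight k ((rb1 j).left q))
            (LinearMap.mulRight k ((rb1 j).right q))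
            (LinearMap.mulLeft k (𝒮 (rb.right j)) ∘ₗ 𝒮)
            ((ra1 i).left p ⊗ₜ[k] ((ra1 i).right p ⊗ₜ[k] ra.right i)) :=
        Finset.sum_congr rfl fun j _ => Finset.sum_congr rfl fun q _ =>
          triple_exchange _ ra ra1 ra2
    _ = ∑ j ∈ rb.index, ∑ q ∈ (rb1 j).index, ∑ i ∈ ra.index, ∑ p ∈ (ra1 i).index,
          𝒮 ((ra1 i).left p * (rb1 j).left q) *
            (((ra1 i).right p * (rb1 j).right q)
              * (𝒮 (rb.right j) * 𝒮 (ra.right i))) := by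
        simp [L3_tmul]
    _ = ∑ i ∈ ra.index, ∑ p ∈ (ra1 i).index, ∑ j ∈ rb.index, ∑ q ∈ (rb1 j).index,
          𝒮 ((ra1 i).left p * (rb1 j).left q) *
            (((ra1 i).right p * (rb1 j).right q)
              * (𝒮 (rb.right j) * 𝒮 (ra.right i))) :=
        sum_block_swap _ _ _ _ _
    _ = ∑ i ∈ ra.index, ∑ j ∈ rb.index, ∑ p ∈ (ra1 i).index, ∑ q ∈ (rb1 j).index,
          𝒮 ((ra1 i).left p * (rb1 j).left q) *
            (((ra1 i).right p * (rb1 j).right q)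
              * (𝒮 (rb.right j) * 𝒮 (ra.right i))) :=
        Finset.sum_congr rfl fun i _ => Finset.sum_comm
    _ = ∑ i ∈ ra.index, ∑ j ∈ rb.index,
          (ε (ra.left i) * ε (rb.left j)) • (𝒮 (rb.right j) * 𝒮 (ra.right i)) :=
        Finset.sum_congr rfl fun i _ => Finset.sum_congr rfl fun j _ =>
          conv_collapse' _ (ra1 i) (rb1 j)
    _ = (∑ j ∈ rb.index, ε (rb.left j) • 𝒮 (rb.right j))
          * (∑ i ∈ ra.index, ε (ra.left i) • 𝒮 (ra.right i)) := by
        conv_rhs => rw [Finset.sum_mul_sum]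
        rw [Finset.sum_comm]
        refine Finset.sum_congr rfl fun j _ => Finset.sum_congr rfl fun i _ => ?_
        rw [smul_mul_assoc, mul_smul_comm, smul_smul, mul_comm]
    _ = 𝒮 b * 𝒮 a := by
        have key : ∀ (c : H) (r : Coalgebra.Repr k c (H × H)),
            (∑ j ∈ r.index, ε (r.left j) • 𝒮 (r.right j)) = 𝒮 c := by
          intro c r
          conv_rhs => rw [← repr_sum_counit_left r]
          rw [map_sum]
          exact Finset.sum_congr rfl fun j _ => (map_smul _ _ _).symm
        rw [key b rb, key a ra]



/-- The Galois-type map `x ⊗ y ↦ Σ x₍₁₎ ⊗ f(x₍₂₎) y`. -/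
def Phi (f : H →ₗ[k] H) : H ⊗[k] H →ₗ[k] H ⊗[k] H :=
  LinearMap.lTensor H (LinearMap.mul' k H ∘ₗ f.rTensor H) ∘ₗ
    (TensorProduct.assoc k H H H).toLinearMap ∘ₗ
    LinearMap.rTensor H δ

lemma Phi_tmul' (f : H →ₗ[k] H) (x y : H) :
    Phi f (x ⊗ₜ[k] y)
      = LinearMap.lTensor H (LinearMap.mulRight k y ∘ₗ f) (δ x) := by
  have : ∀ t : H ⊗[k] H,
      LinearMap.lTensor H (LinearMap.mul' k H ∘ₗ f.rTensor H)
        ((TensorProduct.assoc k H H H).toLinearMap (t ⊗ₜ[k] y))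
      = LinearMap.lTensor H (LinearMap.mulRight k y ∘ₗ f) t := by
    intro t
    induction t using TensorProduct.induction_on with
    | zero => rw [zero_tmul, LinearMap.map_zero, LinearMap.map_zero, LinearMap.map_zero]
    | tmul a b => simp [assoc_tmul]
    | add s t hs ht => rw [add_tmul, LinearMap.map_add, LinearMap.map_add, LinearMap.map_add, hs, ht]
  simpa [Phi] using this (δ x)

lemma Phi_tmul (f : H →ₗ[k] H) (x y : H) (r : Coalgebra.Repr k x (H × H)) :
    Phi f (x ⊗ₜ[k] y) = ∑ i ∈ r.index, r.left i ⊗ₜ[k] (f (r.right i) * y) := by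
  rw [Phi_tmul', ← r.eq, map_sum]
  simp

lemma Phi_Phi (f g : H →ₗ[k] H) (t : H ⊗[k] H) :
    Phi f (Phi g t)
      = Phi (LinearMap.mul' k H ∘ₗ TensorProduct.map f g ∘ₗ δ) t := by
  induction t using TensorProduct.induction_on with
  | zero => simp
  | add s t hs ht => rw [map_add, map_add, map_add, hs, ht]
  | tmul x y =>
    set r := Coalgebra.Repr.arbitrary k x
    set r1 : ∀ i : r.ι, Coalgebra.Repr k (r.left i) (H × H) := fun i => Coalgebra.Repr.arbitrary k _
    set r2 : ∀ i : r.ι, Coalgebra.Repr k (r.right i) (H × H) := fun i => Coalgebra.Repr.arbitrary k _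
    set L : H ⊗[k] (H ⊗[k] H) →ₗ[k] H ⊗[k] H :=
      TensorProduct.map LinearMap.id
        (LinearMap.mul' k H ∘ₗ TensorProduct.map f (LinearMap.mulRight k y ∘ₗ g)) with hL
    have hLval : ∀ u v w : H, L (u ⊗ₜ[k] (v ⊗ₜ[k] w)) = u ⊗ₜ[k] (f v * (g w * y)) := by
      intro u v w; simp [hL]
    calc Phi f (Phi g (x ⊗ₜ[k] y))
        = ∑ i ∈ r.index, Phi f (r.left i ⊗ₜ[k] (g (r.right i) * y)) := by
          rw [Phi_tmul g x y r, map_sum]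
      _ = ∑ i ∈ r.index, ∑ p ∈ (r1 i).index,
            L ((r1 i).left p ⊗ₜ[k] ((r1 i).right p ⊗ₜ[k] r.right i)) := by
          refine Finset.sum_congr rfl fun i _ => ?_
          rw [Phi_tmul f _ _ (r1 i)]
          exact Finset.sum_congr rfl fun p _ => (hLval _ _ _).symm
      _ = ∑ i ∈ r.index, ∑ q ∈ (r2 i).index,
            L (r.left i ⊗ₜ[k] ((r2 i).left q ⊗ₜ[k] (r2 i).right q)) :=
          (triple_exchange L r r1 r2).symm
      _ = ∑ i ∈ r.index, ∑ q ∈ (r2 i).index,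
            r.left i ⊗ₜ[k] ((f ((r2 i).left q) * g ((r2 i).right q)) * y) := by
          refine Finset.sum_congr rfl fun i _ => Finset.sum_congr rfl fun q _ => ?_
          rw [hLval, mul_assoc]
      _ = Phi (LinearMap.mul' k H ∘ₗ TensorProduct.map f g ∘ₗ δ) (x ⊗ₜ[k] y) := by
          rw [Phi_tmul _ x y r]
          refine Finset.sum_congr rfl fun i _ => ?_
          have hc : (LinearMap.mul' k H ∘ₗ TensorProduct.map f g ∘ₗ δ) (r.right i)
              = ∑ q ∈ (r2 i).index, f ((r2 i).left q) * g ((r2 i).right q) := by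
            rw [LinearMap.comp_apply, LinearMap.comp_apply, ← (r2 i).eq, map_sum, map_sum]
            simp
          rw [hc, Finset.sum_mul, tmul_sum]

lemma Phi_counit (t : H ⊗[k] H) :
    Phi ((Algebra.linearMap k H) ∘ₗ ε) t = t := by
  induction t using TensorProduct.induction_on with
  | zero => simp
  | add s t hs ht => rw [map_add, hs, ht]
  | tmul x y =>
    set r := Coalgebra.Repr.arbitrary k x
    rw [Phi_tmul _ x y r]
    calc ∑ i ∈ r.index, r.left i ⊗ₜ[k] ((Algebra.linearMap k H ∘ₗ ε) (r.right i) * y)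
        = ∑ i ∈ r.index, (ε (r.right i) • r.left i) ⊗ₜ[k] y := by
          refine Finset.sum_congr rfl fun i _ => ?_
          rw [LinearMap.comp_apply, Algebra.linearMap_apply, Algebra.algebraMap_eq_smul_one,
            smul_mul_assoc, one_mul, tmul_smul, smul_tmul']
      _ = x ⊗ₜ[k] y := by rw [← sum_tmul, repr_sum_counit_right r]

lemma Phi_S_Phi_id (t : H ⊗[k] H) : Phi 𝒮 (Phi LinearMap.id t) = t := by
  rw [Phi_Phi]
  have h : (LinearMap.mul' k H ∘ₗ TensorProduct.map 𝒮 (LinearMap.id : H →ₗ[k] H) ∘ₗ δ)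
      = Algebra.linearMap k H ∘ₗ ε := HopfAlgebra.mul_antipode_rTensor_comul
  rw [h]
  exact Phi_counit t

lemma Phi_id_Phi_S (t : H ⊗[k] H) : Phi LinearMap.id (Phi 𝒮 t) = t := by
  rw [Phi_Phi]
  have h : (LinearMap.mul' k H ∘ₗ TensorProduct.map (LinearMap.id : H →ₗ[k] H) 𝒮 ∘ₗ δ)
      = Algebra.linearMap k H ∘ₗ ε := HopfAlgebra.mul_antipode_lTensor_comul
  rw [h]
  exact Phi_counit t


lemma xiAux_comul (I : Submodule k H) (z y : H) :
    xiAux k H I (z ⊗ₜ[k] y) = TensorProduct.map I.mkQ (LinearMap.mulRight k y) (δ z) := by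
  have key : ∀ t : H ⊗[k] H,
      TensorProduct.map I.mkQ (LinearMap.mul' k H)
        ((TensorProduct.assoc k H H H).toLinearMap (t ⊗ₜ[k] y))
      = TensorProduct.map I.mkQ (LinearMap.mulRight k y) t := by
    intro t
    induction t using TensorProduct.induction_on with
    | zero => rw [zero_tmul, LinearMap.map_zero, LinearMap.map_zero, LinearMap.map_zero]
    | tmul a b => simp [assoc_tmul]
    | add s t hs ht =>
        rw [add_tmul, LinearMap.map_add, LinearMap.map_add, LinearMap.map_add, hs, ht]
  simpa [xiAux] using key (δ z)

lemma xiAux_eq (I : Submodule k H) :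
    xiAux k H I = (LinearMap.rTensor H I.mkQ) ∘ₗ Phi (LinearMap.id : H →ₗ[k] H) := by
  refine TensorProduct.ext' fun x y => ?_
  rw [LinearMap.comp_apply, Phi_tmul', xiAux_comul]
  have : ∀ t : H ⊗[k] H,
      LinearMap.rTensor H I.mkQ
          (LinearMap.lTensor H (LinearMap.mulRight k y ∘ₗ LinearMap.id) t)
        = TensorProduct.map I.mkQ (LinearMap.mulRight k y) t := by
    intro t
    induction t using TensorProduct.induction_on with
    | zero => simp
    | tmul a b => simp
    | add s t hs ht => rw [LinearMap.map_add, LinearMap.map_add, LinearMap.map_add, hs, ht]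
  exact (this (δ x)).symm

end Aux


section Main
open Coalgebra
variable {k H : Type*} [Field k] [Ring H] [HopfAlgebra k H]

local notation "ε" => (Coalgebra.counit : H →ₗ[k] k)
local notation "δ" => (Coalgebra.comul : H →ₗ[k] H ⊗[k] H)
local notation "𝒮" => (HopfAlgebra.antipode k : H →ₗ[k] H)

lemma mkQ_mul_coideal (B : Subalgebra k H) (p : H) {b : H} (hb : b ∈ B) :
    (HSplus k H (B : Set H)).mkQ (p * b) = (HSplus k H (B : Set H)).mkQ (ε b • p) := by
  rw [Submodule.mkQ_apply, Submodule.mkQ_apply, Submodule.Quotient.eq]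
  have h1 : p * b - ε b • p = p * (b - ε b • 1) := by
    rw [mul_sub, mul_smul_comm, mul_one]
  rw [h1]
  refine Submodule.subset_span ⟨p, b - ε b • 1, ⟨?_, ?_⟩, rfl⟩
  · exact B.sub_mem hb (B.smul_mem B.one_mem _)
  · simp [map_sub, map_smul, Bialgebra.counit_one, smul_eq_mul]

lemma comul_of_coideal (B : Subalgebra k H) (hB : IsRightCoidealSubalgebra k H B)
    {b : H} (hb : b ∈ B) :
    ∃ s : Finset (↥(Subalgebra.toSubmodule B) × H),
      δ b = ∑ l ∈ s, ((l.1 : H) ⊗ₜ[k] l.2) := by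
  obtain ⟨wb, hwb⟩ := hB b hb
  obtain ⟨s, hs⟩ := TensorProduct.exists_finset (R := k) wb
  refine ⟨s, ?_⟩
  rw [← hwb, hs, map_sum]
  simp

lemma b_eq_sum (B : Subalgebra k H) {b : H}
    {s : Finset (↥(Subalgebra.toSubmodule B) × H)}
    (hδb : δ b = ∑ l ∈ s, ((l.1 : H) ⊗ₜ[k] l.2)) :
    b = ∑ l ∈ s, ε (l.1 : H) • l.2 := by
  have h1 := Coalgebra.rTensor_counit_comul (R := k) b
  rw [hδb, map_sum] at h1
  have h2 := congrArg (TensorProduct.lid k H) h1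
  simp only [map_sum, LinearMap.rTensor_tmul, lid_tmul] at h2
  simpa using h2.symm

lemma JB_le_ker (B : Subalgebra k H) (hB : IsRightCoidealSubalgebra k H B) :
    JB k H (B : Set H) ≤ LinearMap.ker (xiAux k H (HSplus k H (B : Set H))) := by
  refine Submodule.span_le.mpr ?_
  rintro _ ⟨x, y, b, hb, rfl⟩
  rw [SetLike.mem_coe, LinearMap.mem_ker, map_sub, sub_eq_zero]
  obtain ⟨s, hδb⟩ := comul_of_coideal B hB hb
  have hbval := b_eq_sum B hδb
  set I := HSplus k H (B : Set H) with hI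
  set r := Coalgebra.Repr.arbitrary k x
  rw [xiAux_comul, xiAux_comul]
  have e1 : δ (x * b) = ∑ i ∈ r.index, ∑ l ∈ s,
      ((r.left i * (l.1 : H)) ⊗ₜ[k] (r.right i * l.2)) := by
    rw [Bialgebra.comul_mul, ← r.eq, hδb, Finset.sum_mul_sum]
    simp [Algebra.TensorProduct.tmul_mul_tmul]
  rw [e1]
  simp only [map_sum, map_tmul, LinearMap.mulRight_apply]
  conv_rhs => rw [← r.eq]
  simp only [map_sum, map_tmul, LinearMap.mulRight_apply]
  refine Finset.sum_congr rfl fun i _ => ?_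
  calc ∑ l ∈ s, I.mkQ (r.left i * (l.1 : H)) ⊗ₜ[k] (r.right i * l.2 * y)
      = ∑ l ∈ s, I.mkQ (r.left i) ⊗ₜ[k] (r.right i * (ε (l.1 : H) • l.2) * y) := by
        refine Finset.sum_congr rfl fun l _ => ?_
        rw [mkQ_mul_coideal B (r.left i) ((Subalgebra.mem_toSubmodule B).mp l.1.2),
          map_smul, smul_tmul, mul_smul_comm, smul_mul_assoc]
    _ = I.mkQ (r.left i) ⊗ₜ[k] (r.right i * b * y) := by
        rw [← tmul_sum]
        congr 1
        rw [← Finset.sum_mul, ← Finset.mul_sum, ← hbval]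
    _ = I.mkQ (r.left i) ⊗ₜ[k] (r.right i * (b * y)) := by rw [mul_assoc]

lemma sum_subalg_mul_antipode (B : Subalgebra k H) {b : H} (hb0 : ε b = 0)
    {s : Finset (↥(Subalgebra.toSubmodule B) × H)}
    (hδb : δ b = ∑ l ∈ s, ((l.1 : H) ⊗ₜ[k] l.2)) :
    ∑ l ∈ s, (l.1 : H) * 𝒮 l.2 = 0 := by
  have h1 := HopfAlgebra.mul_antipode_lTensor_comul_apply (R := k) b
  rw [hδb] at h1
  simp only [map_sum, LinearMap.lTensor_tmul, LinearMap.mul'_apply] at h1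
  rw [hb0] at h1
  simpa using h1

lemma PhiS_gen_mem (B : Subalgebra k H) (hB : IsRightCoidealSubalgebra k H B)
    (d h : H) {b : H} (hbB : b ∈ B) (hb0 : ε b = 0) :
    Phi 𝒮 ((h * b) ⊗ₜ[k] d) ∈ JB k H (B : Set H) := by
  obtain ⟨s, hδb⟩ := comul_of_coideal B hB hbB
  set r := Coalgebra.Repr.arbitrary k h
  have e1 : Phi 𝒮 ((h * b) ⊗ₜ[k] d) = ∑ i ∈ r.index, ∑ l ∈ s,
      ((r.left i * (l.1 : H)) ⊗ₜ[k] (𝒮 (r.right i * l.2) * d)) := by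
    rw [Phi_tmul', Bialgebra.comul_mul, ← r.eq, hδb, Finset.sum_mul_sum]
    simp [Algebra.TensorProduct.tmul_mul_tmul]
  have e2 : ∑ i ∈ r.index, ∑ l ∈ s,
      (r.left i ⊗ₜ[k] ((l.1 : H) * (𝒮 (r.right i * l.2) * d))) = 0 := by
    have hterm : ∀ i : r.ι, ∀ l : ↥(Subalgebra.toSubmodule B) × H,
        (l.1 : H) * (𝒮 (r.right i * l.2) * d)
          = ((l.1 : H) * 𝒮 l.2) * (𝒮 (r.right i) * d) := by
      intro i l
      rw [antipode_mul, mul_assoc (𝒮 l.2), ← mul_assoc (l.1 : H)]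
    calc ∑ i ∈ r.index, ∑ l ∈ s,
          (r.left i ⊗ₜ[k] ((l.1 : H) * (𝒮 (r.right i * l.2) * d)))
        = ∑ i ∈ r.index,
            (r.left i ⊗ₜ[k] ((∑ l ∈ s, (l.1 : H) * 𝒮 l.2) * (𝒮 (r.right i) * d))) := by
          refine Finset.sum_congr rfl fun i _ => ?_
          rw [Finset.sum_mul, tmul_sum]
          exact Finset.sum_congr rfl fun l _ => by rw [hterm i l]
      _ = 0 := by
          rw [sum_subalg_mul_antipode B hb0 hδb]
          simp
  have e3 : Phi 𝒮 ((h * b) ⊗ₜ[k] d) = ∑ i ∈ r.index, ∑ l ∈ s,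
      ((r.left i * (l.1 : H)) ⊗ₜ[k] (𝒮 (r.right i * l.2) * d)
        - r.left i ⊗ₜ[k] ((l.1 : H) * (𝒮 (r.right i * l.2) * d))) := by
    simp only [Finset.sum_sub_distrib]
    rw [e2, sub_zero, ← e1]
  rw [e3]
  refine Submodule.sum_mem _ fun i _ => Submodule.sum_mem _ fun l _ => ?_
  exact Submodule.subset_span
    ⟨r.left i, 𝒮 (r.right i * l.2) * d, (l.1 : H),
      (Subalgebra.mem_toSubmodule B).mp l.1.2, rfl⟩

lemma ker_le_JB (B : Subalgebra k H) (hB : IsRightCoidealSubalgebra k H B) :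
    LinearMap.ker (xiAux k H (HSplus k H (B : Set H))) ≤ JB k H (B : Set H) := by
  intro t ht
  rw [LinearMap.mem_ker, xiAux_eq, LinearMap.comp_apply] at ht
  have h2 : Phi (LinearMap.id : H →ₗ[k] H) t ∈
      LinearMap.range (LinearMap.rTensor H (HSplus k H (B : Set H)).subtype) := by
    rw [← rTensor_mkQ]
    exact ht
  obtain ⟨v, hv⟩ := h2
  have ht' : t = Phi 𝒮 (LinearMap.rTensor H (HSplus k H (B : Set H)).subtype v) := by
    rw [hv, Phi_S_Phi_id]
  rw [ht']
  clear ht' hv ht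
  induction v using TensorProduct.induction_on with
  | zero => simpa using Submodule.zero_mem _
  | add v w hvv hww =>
      rw [LinearMap.map_add, map_add]
      exact Submodule.add_mem _ hvv hww
  | tmul u dd =>
      rw [LinearMap.rTensor_tmul]
      have hu : (u : H) ∈ HSplus k H (B : Set H) := u.2
      have main : ∀ z : H, z ∈ HSplus k H (B : Set H) →
          Phi 𝒮 (z ⊗ₜ[k] dd) ∈ JB k H (B : Set H) := by
        intro z hz
        refine Submodule.span_induction ?_ ?_ ?_ ?_ hz
        · rintro _ ⟨h', b, ⟨hbB, hb0⟩, rfl⟩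
          exact PhiS_gen_mem B hB dd h' hbB hb0
        · simpa using Submodule.zero_mem _
        · intro z₁ z₂ _ _ h₁ h₂
          rw [add_tmul, map_add]
          exact Submodule.add_mem _ h₁ h₂
        · intro c z₁ _ h₁
          rw [← smul_tmul', map_smul]
          exact Submodule.smul_mem _ _ h₁
      exact main _ hu

end Main

/-- For a right coideal subalgebra `B`, the map
`x ⊗ y ↦ Σ π(x₍₁₎) ⊗ x₍₂₎y` vanishes on `J_B` and the induced map
`ξ : H ⊗_B H → (H/HB⁺) ⊗ H` is a linear isomorphism. -/
theorem xi_bijective (k H : Type*) [Field k] [Ring H] [HopfAlgebra k H]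
    (B : Subalgebra k H) (hB : IsRightCoidealSubalgebra k H B) :
    ∃ hle : JB k H (B : Set H) ≤
        LinearMap.ker (xiAux k H (HSplus k H (B : Set H))),
      Function.Bijective
        ((JB k H (B : Set H)).liftQ (xiAux k H (HSplus k H (B : Set H))) hle) := by
  refine ⟨JB_le_ker B hB, ?_, ?_⟩
  · rw [← LinearMap.ker_eq_bot]
    exact Submodule.ker_liftQ_eq_bot _ _ _ (ker_le_JB B hB)
  · rw [← LinearMap.range_eq_top, Submodule.range_liftQ, LinearMap.range_eq_top, xiAux_eq]
    exact (LinearMap.rTensor_surjective H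
        (Submodule.mkQ_surjective _)).comp (fun t => ⟨Phi (HopfAlgebra.antipode k) t, Phi_id_Phi_S t⟩)

end HopfGalois
end
end

section
/- Let k be a field, H a Hopf algebra over k, and I a left ideal coideal of H. Set B := H^{co H/I}. Then B = H^{co H/(HB⁺)}, where HB⁺ is the left ideal of H generated by B ∩ ker ε; that is, Ψ ∘ Φ ∘ Ψ = Ψ for the assignments Ψ(I) = H^{co H/I} and Φ(B) = HB⁺. -/
open TensorProduct

noncomputable section

namespace HopfGalois

variable (k : Type*) (H : Type*) [Field k] [Ring H] [HopfAlgebra k H]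

variable {k H} in
lemma mem_coinv_iff (I : Submodule k H) (x : H) :
    x ∈ coinv k H I ↔
      TensorProduct.map I.mkQ (LinearMap.id : H →ₗ[k] H) (Coalgebra.comul x)
        = I.mkQ 1 ⊗ₜ[k] x := by
  simp [coinv, LinearMap.mem_ker, LinearMap.sub_apply, sub_eq_zero]

variable {k H} in
lemma one_mem_coinv (I : Submodule k H) : (1 : H) ∈ coinv k H I := by
  rw [mem_coinv_iff]
  have h : (Coalgebra.comul : H →ₗ[k] H ⊗[k] H) 1 = 1 ⊗ₜ[k] 1 := by
    rw [show ((1:H) ⊗ₜ[k] (1:H)) = (1 : H ⊗[k] H) from (Algebra.TensorProduct.one_def).symm]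
    exact Bialgebra.comul_one (R := k) (A := H)
  rw [h]; simp

variable {k H} in
lemma sub_counit_smul_mem (I : Submodule k H) {x : H} (hx : x ∈ coinv k H I) :
    x - (Coalgebra.counit (R := k) x) • 1 ∈ I := by
  rw [mem_coinv_iff] at hx
  have h1 := congrArg ((TensorProduct.rid k (H ⧸ I)).toLinearMap ∘ₗ
      LinearMap.lTensor (H ⧸ I) (Coalgebra.counit (R := k) (A := H))) hx
  simp only [LinearMap.coe_comp, Function.comp_apply, LinearEquiv.coe_coe] at h1
  have h2 : LinearMap.lTensor (H ⧸ I) (Coalgebra.counit (R := k) (A := H))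
      (TensorProduct.map I.mkQ (LinearMap.id : H →ₗ[k] H) (Coalgebra.comul x))
      = I.mkQ x ⊗ₜ[k] (1 : k) := by
    have : TensorProduct.map I.mkQ (LinearMap.id : H →ₗ[k] H) = I.mkQ.rTensor H := rfl
    rw [this, ← LinearMap.comp_apply, LinearMap.lTensor_comp_rTensor,
      ← LinearMap.rTensor_comp_lTensor, LinearMap.comp_apply,
      Coalgebra.lTensor_counit_comul]
    rfl
  rw [h2] at h1
  simp only [TensorProduct.rid_tmul, LinearMap.lTensor_tmul, one_smul] at h1
  have h3 : I.mkQ x = I.mkQ ((Coalgebra.counit (R := k) x) • 1) := by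
    rw [map_smul, h1]
  simpa using (Submodule.Quotient.eq I).mp h3

variable {k H} in
lemma mk_rTensor {P : Type*} [AddCommGroup P] [Module k P] (p : P) (z : H ⊗[k] H) :
    (TensorProduct.mk k P H p).rTensor H z
      = (TensorProduct.assoc k P H H).symm (p ⊗ₜ[k] z) := by
  have h : (TensorProduct.mk k P H p).rTensor H
      = (TensorProduct.assoc k P H H).symm.toLinearMap ∘ₗ TensorProduct.mk k P (H ⊗[k] H) p :=
    TensorProduct.ext' fun u v => by simp
  rw [h]; rfl

variable {k H} in
lemma comul_coinv_mem (I : Submodule k H) {x : H} (hx : x ∈ coinv k H I) :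
    (Coalgebra.comul : H →ₗ[k] H ⊗[k] H) x ∈ LinearMap.range
      (TensorProduct.map (coinv k H I).subtype (LinearMap.id : H →ₗ[k] H)) := by
  set T : H →ₗ[k] (H ⧸ I) ⊗[k] H :=
    (TensorProduct.map I.mkQ (LinearMap.id : H →ₗ[k] H)
        ∘ₗ (Coalgebra.comul : H →ₗ[k] H ⊗[k] H))
      - TensorProduct.mk k (H ⧸ I) H (I.mkQ 1) with hT
  have hex : Function.Exact ((LinearMap.ker T).subtype.rTensor H) (T.rTensor H) :=
    Module.Flat.rTensor_exact (M := H) (LinearMap.exact_subtype_ker_map T)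
  have hx' : TensorProduct.map I.mkQ (LinearMap.id : H →ₗ[k] H) (Coalgebra.comul x)
      = I.mkQ 1 ⊗ₜ[k] x := (mem_coinv_iff I x).mp hx
  have h0 : T.rTensor H ((Coalgebra.comul : H →ₗ[k] H ⊗[k] H) x) = 0 := by
    rw [hT, LinearMap.rTensor_sub]
    change LinearMap.rTensor H (TensorProduct.map I.mkQ (LinearMap.id : H →ₗ[k] H)
        ∘ₗ (Coalgebra.comul : H →ₗ[k] H ⊗[k] H)) (Coalgebra.comul x)
      - LinearMap.rTensor H (TensorProduct.mk k (H ⧸ I) H (I.mkQ 1)) (Coalgebra.comul x) = 0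
    rw [LinearMap.rTensor_comp,
      LinearMap.comp_apply]
    have s1 : (Coalgebra.comul : H →ₗ[k] H ⊗[k] H).rTensor H (Coalgebra.comul x)
        = (TensorProduct.assoc k H H H).symm
            ((Coalgebra.comul : H →ₗ[k] H ⊗[k] H).lTensor H (Coalgebra.comul x)) :=
      (Coalgebra.coassoc_symm_apply x).symm
    rw [s1]
    have s2 : (TensorProduct.map I.mkQ (LinearMap.id : H →ₗ[k] H)).rTensor H
          ((TensorProduct.assoc k H H H).symm
            ((Coalgebra.comul : H →ₗ[k] H ⊗[k] H).lTensor H (Coalgebra.comul x)))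
        = (TensorProduct.assoc k (H ⧸ I) H H).symm
            (TensorProduct.map I.mkQ (TensorProduct.map LinearMap.id LinearMap.id)
              ((Coalgebra.comul : H →ₗ[k] H ⊗[k] H).lTensor H (Coalgebra.comul x))) :=
      TensorProduct.map_map_assoc_symm _ _ _ _
    rw [s2, TensorProduct.map_id]
    have s3 : TensorProduct.map I.mkQ (LinearMap.id : H ⊗[k] H →ₗ[k] H ⊗[k] H)
          ((Coalgebra.comul : H →ₗ[k] H ⊗[k] H).lTensor H (Coalgebra.comul x))
        = (Coalgebra.comul : H →ₗ[k] H ⊗[k] H).lTensor (H ⧸ I)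
            (I.mkQ.rTensor H (Coalgebra.comul x)) := by
      rw [show TensorProduct.map I.mkQ (LinearMap.id : H ⊗[k] H →ₗ[k] H ⊗[k] H)
            = I.mkQ.rTensor (H ⊗[k] H) from rfl,
        ← LinearMap.comp_apply, LinearMap.rTensor_comp_lTensor,
        ← LinearMap.lTensor_comp_rTensor, LinearMap.comp_apply]
    rw [s3, show I.mkQ.rTensor H = TensorProduct.map I.mkQ (LinearMap.id : H →ₗ[k] H) from rfl,
      hx', mk_rTensor]
    simp [LinearMap.lTensor_tmul]
  obtain ⟨w, hw⟩ := (hex _).mp h0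
  exact ⟨w, hw⟩


variable {k H} in
lemma sub_counit_smul_mem_HSplus (I : Submodule k H) {b : H} (hb : b ∈ coinv k H I) :
    b - (Coalgebra.counit (R := k) b) • 1
      ∈ HSplus k H ((coinv k H I : Submodule k H) : Set H) := by
  apply Submodule.subset_span
  refine ⟨1, b - (Coalgebra.counit (R := k) b) • 1, ⟨?_, ?_⟩, (one_mul _).symm⟩
  · exact sub_mem hb (Submodule.smul_mem _ _ (one_mem_coinv I))
  · simp [map_sub, map_smul, Bialgebra.counit_one, smul_eq_mul]

variable {k H} in
lemma HSplus_le (I : Submodule k H) (hI : IsLeftIdealCoideal k H I) :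
    HSplus k H ((coinv k H I : Submodule k H) : Set H) ≤ I := by
  apply Submodule.span_le.mpr
  rintro z ⟨h, b, ⟨hbB, hbe⟩, rfl⟩
  have hbI : b ∈ I := by
    have := sub_counit_smul_mem I hbB
    rw [hbe, zero_smul, sub_zero] at this
    exact this
  exact hI.mul_mem_left h b hbI

variable {k H} in
lemma coinv_anti {I J : Submodule k H} (hJI : J ≤ I) : coinv k H J ≤ coinv k H I := by
  intro x hx
  rw [mem_coinv_iff] at hx ⊢
  have hle : J ≤ I.comap LinearMap.id := hJI
  have hq : (Submodule.mapQ J I LinearMap.id hle) ∘ₗ J.mkQ = I.mkQ := by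
    rw [Submodule.mapQ_mkQ]; rfl
  calc TensorProduct.map I.mkQ (LinearMap.id : H →ₗ[k] H) (Coalgebra.comul x)
      = TensorProduct.map ((Submodule.mapQ J I LinearMap.id hle) ∘ₗ J.mkQ)
          ((LinearMap.id : H →ₗ[k] H) ∘ₗ LinearMap.id) (Coalgebra.comul x) := by
        rw [hq, LinearMap.id_comp]
    _ = TensorProduct.map (Submodule.mapQ J I LinearMap.id hle) LinearMap.id
          (TensorProduct.map J.mkQ (LinearMap.id : H →ₗ[k] H) (Coalgebra.comul x)) := by
        rw [TensorProduct.map_comp]; rfl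
    _ = I.mkQ 1 ⊗ₜ[k] x := by
        rw [hx]
        simp [Submodule.mapQ_apply]

variable {k H} in
lemma coinv_le_coinv_HSplus (I : Submodule k H) :
    coinv k H I ≤ coinv k H (HSplus k H ((coinv k H I : Submodule k H) : Set H)) := by
  classical
  set B : Submodule k H := coinv k H I with hB
  set J : Submodule k H := HSplus k H ((coinv k H I : Submodule k H) : Set H) with hJ
  intro x hx
  obtain ⟨w, hw⟩ := comul_coinv_mem I hx
  rw [mem_coinv_iff]
  have hqs : J.mkQ ∘ₗ B.subtype
      = LinearMap.toSpanSingleton k (H ⧸ J) (J.mkQ 1) ∘ₗ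
          ((Coalgebra.counit : H →ₗ[k] k) ∘ₗ B.subtype) := by
    ext b
    have hmem : (b : H) - (Coalgebra.counit (R := k) (b : H)) • 1 ∈ J :=
      sub_counit_smul_mem_HSplus I b.2
    have h0 : J.mkQ ((b : H) - (Coalgebra.counit (R := k) (b : H)) • 1) = 0 := by
      rwa [Submodule.mkQ_apply, Submodule.Quotient.mk_eq_zero]
    rw [map_sub, map_smul, sub_eq_zero] at h0
    simpa [LinearMap.toSpanSingleton_apply] using h0
  have hmapt : TensorProduct.map (LinearMap.toSpanSingleton k (H ⧸ J) (J.mkQ 1))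
        (LinearMap.id : H →ₗ[k] H)
      = TensorProduct.mk k (H ⧸ J) H (J.mkQ 1) ∘ₗ (TensorProduct.lid k H).toLinearMap :=
    TensorProduct.ext' fun c h => by
      simp [LinearMap.toSpanSingleton_apply, TensorProduct.smul_tmul]
  have hcount : TensorProduct.map ((Coalgebra.counit : H →ₗ[k] k) ∘ₗ B.subtype)
      (LinearMap.id : H →ₗ[k] H) w = (1 : k) ⊗ₜ[k] x := by
    have h1 := congrArg (fun f => f w)
      (TensorProduct.map_comp (Coalgebra.counit : H →ₗ[k] k) (LinearMap.id : H →ₗ[k] H)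
        B.subtype (LinearMap.id : H →ₗ[k] H))
    simp only [LinearMap.comp_id, LinearMap.coe_comp, Function.comp_apply] at h1
    rw [h1, hw]
    exact Coalgebra.rTensor_counit_comul x
  calc TensorProduct.map J.mkQ (LinearMap.id : H →ₗ[k] H) (Coalgebra.comul x)
      = TensorProduct.map (J.mkQ ∘ₗ B.subtype)
          ((LinearMap.id : H →ₗ[k] H) ∘ₗ LinearMap.id) w := by
        rw [← hw, TensorProduct.map_comp]; rfl
    _ = TensorProduct.map (LinearMap.toSpanSingleton k (H ⧸ J) (J.mkQ 1)) LinearMap.id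
          (TensorProduct.map ((Coalgebra.counit : H →ₗ[k] k) ∘ₗ B.subtype) LinearMap.id w) := by
        rw [hqs, ← LinearMap.comp_apply, ← TensorProduct.map_comp]
    _ = J.mkQ 1 ⊗ₜ[k] x := by
        rw [hcount, hmapt]
        simp

/-- For a left ideal coideal `I` and `B := H^{co H/I}`,
one has `B = H^{co H/(HB⁺)}`; that is, `Ψ ∘ Φ ∘ Ψ = Ψ`. -/
theorem coinv_HSplus_coinv (k H : Type*) [Field k] [Ring H] [HopfAlgebra k H]
    (I : Submodule k H) (hI : IsLeftIdealCoideal k H I) :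
    coinv k H I =
      coinv k H (HSplus k H ((coinv k H I : Submodule k H) : Set H)) := by
  exact le_antisymm (coinv_le_coinv_HSplus I) (coinv_anti (HSplus_le I hI))


end HopfGalois
end
end
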